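/- Let G be a finite group acting linearly on ℝ^n and hence on ℝ[X_1, …, X_n], and let ℝ[X]_{≤ d} = ⊕_{i ∈ I} ⊕_{j=1}^{η_i} W_{i,j} be a decomposition of the polynomials of degree at most d into irreducible G-submodules, where for each i the W_{i,j} are pairwise isomorphic to an irreducible representation W_i, the W_i for distinct i are non-isomorphic, and each W_i remains irreducible over ℂ. Let f_{i1}, …, f_{iη_i} ∈ ℝ[X]_{≤ d} be polynomials such that the G-span of f_{i1} equals W_{i,1} and, for each j, f_{ij} is the image of f_{i1} under the (up to scalar unique) G-isomorphism from W_{i,1} to W_{i,j}. Then every G-invariant polynomial p of degree at most 2d which is a sum of squares can be written as p = Σ_{i ∈ I} Σ_{j=1}^{η_i} Σ_{g ∈ G} p_{ij}^g, where each p_{ij} is a sum of squares of elements of the real linear span of f_{i1}, …, f_{iη_i}. -/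

import Mathlib

open MvPolynomial
open scoped Matrix

set_option synthInstance.maxHeartbeats 1000000
set_option maxHeartbeats 1000000

/-- The action of an invertible matrix `M` on polynomials by linear change of variables:
`X_i ↦ Σ_j M i j • X_j`. -/
noncomputable def polyAct {K : Type*} [CommSemiring K] {n : ℕ}
    (M : Matrix (Fin n) (Fin n) K) :
    MvPolynomial (Fin n) K →ₐ[K] MvPolynomial (Fin n) K :=
  MvPolynomial.aeval (fun i => ∑ j, M i j • MvPolynomial.X j)

namespace SOSAux

variable {K : Type*} [CommRing K] [Nontrivial K] {n : ℕ}

theorem polyAct_polyAct (M N : Matrix (Fin n) (Fin n) K) (p : MvPolynomial (Fin n) K) :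
    polyAct M (polyAct N p) = polyAct (N * M) p := by
  have : (polyAct M).comp (polyAct N) = polyAct (N * M) := by
    apply MvPolynomial.algHom_ext
    intro i
    simp only [AlgHom.comp_apply, polyAct, aeval_X, map_sum, map_smul]
    simp only [Finset.smul_sum, smul_smul, Matrix.mul_apply, Finset.sum_smul]
    rw [Finset.sum_comm]
  calc polyAct M (polyAct N p) = ((polyAct M).comp (polyAct N)) p := rfl
    _ = polyAct (N * M) p := by rw [this]

theorem polyAct_one (p : MvPolynomial (Fin n) K) : polyAct (1 : Matrix (Fin n) (Fin n) K) p = p := by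
  have : polyAct (1 : Matrix (Fin n) (Fin n) K) = AlgHom.id K _ := by
    apply MvPolynomial.algHom_ext
    intro i
    simp [polyAct, Matrix.one_apply, Finset.sum_ite_eq]
  rw [this]; rfl

theorem totalDegree_polyAct_le (M : Matrix (Fin n) (Fin n) K) (p : MvPolynomial (Fin n) K) :
    (polyAct M p).totalDegree ≤ p.totalDegree := by
  classical
  have hlin : ∀ i, ((∑ j, M i j • (X j : MvPolynomial (Fin n) K))).totalDegree ≤ 1 := by
    intro i
    refine (totalDegree_finset_sum _ _).trans ?_
    refine Finset.sup_le fun j _ => ?_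
    exact (totalDegree_smul_le _ _).trans (by simp [totalDegree_X])
  rw [polyAct, aeval_def, eval₂_eq]
  refine (totalDegree_finset_sum _ _).trans ?_
  refine Finset.sup_le fun m hm => ?_
  refine (totalDegree_mul _ _).trans ?_
  have hC : ((algebraMap K (MvPolynomial (Fin n) K)) (coeff m p)).totalDegree = 0 := by
    rw [MvPolynomial.algebraMap_eq, totalDegree_C]
  rw [hC, zero_add]
  refine le_trans (totalDegree_finset_prod _ _) ?_
  have h1 : ∀ i ∈ m.support, ((∑ j, M i j • (X j : MvPolynomial (Fin n) K)) ^ m i).totalDegree ≤ m i := by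
    intro i _
    exact (totalDegree_pow _ _).trans (by simpa using Nat.mul_le_mul_left (m i) (hlin i))
  refine (Finset.sum_le_sum h1).trans ?_
  have : ∑ i ∈ m.support, m i = m.sum fun _ e => e := rfl
  rw [this]
  exact Finset.le_sup (f := fun m : Fin n →₀ ℕ => m.sum fun _ e => e) hm


variable {n : ℕ}

local notation "P" => MvPolynomial (Fin n) ℝ

theorem eq_zero_of_sum_sq_eq_zero {l : ℕ} (s : Fin l → P) (h : ∑ t, (s t) ^ 2 = 0)
    (t : Fin l) : s t = 0 := by
  apply MvPolynomial.funext
  intro x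
  have hx : ∑ t, (eval x (s t)) ^ 2 = 0 := by
    have := congrArg (eval x) h
    simpa using this
  have := Finset.sum_eq_zero_iff_of_nonneg (fun t _ => sq_nonneg (eval x (s t))) |>.mp hx t
    (Finset.mem_univ t)
  have : eval x (s t) = 0 := by nlinarith [this]
  simpa using this

theorem homogeneousComponent_sq {m : ℕ} (q : P) (hq : q.totalDegree ≤ m) :
    homogeneousComponent (2 * m) (q ^ 2) = (homogeneousComponent m q) ^ 2 := by
  classical
  have hdecomp : q = ∑ k ∈ Finset.range (m + 1), homogeneousComponent k q := by
    refine Eq.trans (sum_homogeneousComponent q).symm ?_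
    apply Finset.sum_subset
    · exact Finset.range_subset_range.mpr (by omega)
    · intro k _ hk
      rw [Finset.mem_range, not_lt] at hk
      exact homogeneousComponent_eq_zero (φ := q) (n := k) (by omega)
  have hmem : ∀ k, homogeneousComponent k q ∈ homogeneousSubmodule (Fin n) ℝ k :=
    fun k => homogeneousComponent_isHomogeneous k q
  conv_lhs => rw [hdecomp]
  rw [sq, Finset.sum_mul_sum, map_sum]
  have hterm : ∀ k ∈ Finset.range (m+1), ∀ k' ∈ Finset.range (m+1),
      homogeneousComponent (2*m) (homogeneousComponent k q * homogeneousComponent k' q)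
      = if k = m ∧ k' = m then homogeneousComponent m q * homogeneousComponent m q else 0 := by
    intro k hk k' hk'
    have hmul : homogeneousComponent k q * homogeneousComponent k' q
        ∈ homogeneousSubmodule (Fin n) ℝ (k + k') :=
      (mem_homogeneousSubmodule _ _).mpr
        (((mem_homogeneousSubmodule _ _).mp (hmem k)).mul
          ((mem_homogeneousSubmodule _ _).mp (hmem k')))
    rw [homogeneousComponent_of_mem hmul]
    simp only [Finset.mem_range] at hk hk'
    by_cases h : k = m ∧ k' = m
    · obtain ⟨rfl, rfl⟩ := h
      simp [two_mul]
    · have : ¬ (2*m = k + k') := by omega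
      simp [this, h]
  simp only [map_sum]
  rw [Finset.sum_congr rfl (fun k hk => Finset.sum_congr rfl (fun k' hk' => hterm k hk k' hk'))]
  simp [ite_and, Finset.sum_ite_eq', sq]


theorem totalDegree_le_of_sos {d l : ℕ} (s : Fin l → P) (hdeg : (∑ t, (s t) ^ 2).totalDegree ≤ 2 * d)
    (t : Fin l) : (s t).totalDegree ≤ d := by
  classical
  by_contra hcon
  push_neg at hcon
  set m := Finset.univ.sup (fun t : Fin l => (s t).totalDegree) with hm
  have hdm : d < m := lt_of_lt_of_le hcon (Finset.le_sup (f := fun u : Fin l => (s u).totalDegree) (Finset.mem_univ t))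
  have hle : ∀ u : Fin l, (s u).totalDegree ≤ m := fun u => Finset.le_sup (f := fun u : Fin l => (s u).totalDegree) (Finset.mem_univ u)
  have hzero : ∑ u, (homogeneousComponent m (s u)) ^ 2 = 0 := by
    have h1 : homogeneousComponent (2 * m) (∑ u, (s u) ^ 2) = 0 := by
      apply homogeneousComponent_eq_zero
      omega
    rw [map_sum] at h1
    rw [← h1]
    exact Finset.sum_congr rfl fun u _ => (homogeneousComponent_sq (s u) (hle u)).symm
  have hcomp : ∀ u : Fin l, homogeneousComponent m (s u) = 0 :=
    fun u => eq_zero_of_sum_sq_eq_zero _ hzero u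
  -- the sup is attained
  have hne : (Finset.univ : Finset (Fin l)).Nonempty := ⟨t, Finset.mem_univ t⟩
  obtain ⟨t0, _, ht0⟩ := Finset.exists_mem_eq_sup Finset.univ hne
    (fun t : Fin l => (s t).totalDegree)
  have hst0 : (s t0).totalDegree = m := ht0.symm
  have hs0ne : s t0 ≠ 0 := by
    intro h0
    rw [h0] at hst0
    simp [totalDegree_zero] at hst0
    omega
  have hsupne : (s t0).support.Nonempty := by
    rw [Finset.nonempty_iff_ne_empty]
    intro h
    exact hs0ne (MvPolynomial.support_eq_empty.mp h)
  obtain ⟨μ, hμmem, hμ⟩ := Finset.exists_mem_eq_sup _ hsupne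
    (fun μ : Fin n →₀ ℕ => μ.sum fun _ e => e)
  have hcoeff : coeff μ (homogeneousComponent m (s t0)) = coeff μ (s t0) := by
    rw [coeff_homogeneousComponent]
    have hdeg2 : μ.degree = m := by
      have : (μ.sum fun _ e => e) = m := by rw [← hst0, totalDegree, hμ]
      rw [← this, Finsupp.degree, Finsupp.sum]; rfl
    simp [hdeg2]
  have : coeff μ (s t0) ≠ 0 := mem_support_iff.mp hμmem
  rw [hcomp t0, coeff_zero] at hcoeff
  exact this hcoeff.symm


section Action

variable {G : Type*} [Group G] [Fintype G] (ρ : G →* (Matrix (Fin n) (Fin n) ℝ)ˣ)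

/-- The action of `g : G` on polynomials. -/
noncomputable def act (g : G) : P →ₐ[ℝ] P := polyAct (↑(ρ g⁻¹))

theorem act_act (g h : G) (p : P) : act ρ g (act ρ h p) = act ρ (g * h) p := by
  rw [act, act, act, polyAct_polyAct]
  rw [← Units.val_mul, ← map_mul, ← mul_inv_rev]

theorem act_one (p : P) : act ρ 1 p = p := by
  rw [act, inv_one, map_one, Units.val_one, polyAct_one]

theorem act_inv_act (g : G) (p : P) : act ρ g⁻¹ (act ρ g p) = p := by
  rw [act_act, inv_mul_cancel, act_one]

/-- The action as a linear map. -/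
noncomputable def actL (g : G) : P →ₗ[ℝ] P := (act ρ g).toLinearMap

@[simp] theorem actL_apply (g : G) (p : P) : actL ρ g p = act ρ g p := rfl

/-- The (unnormalized) Reynolds operator. -/
noncomputable def Rey : P →ₗ[ℝ] P := ∑ g : G, actL ρ g

theorem rey_apply (p : P) : Rey ρ p = ∑ g : G, act ρ g p := by
  rw [Rey, LinearMap.sum_apply]; rfl

theorem rey_act (h : G) (p : P) : Rey ρ (act ρ h p) = Rey ρ p := by
  rw [rey_apply, rey_apply]
  refine Fintype.sum_equiv (Equiv.mulRight h) _ _ fun g => ?_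
  rw [act_act]; rfl

theorem act_rey (h : G) (p : P) : act ρ h (Rey ρ p) = Rey ρ p := by
  rw [rey_apply, map_sum]
  refine Fintype.sum_equiv (Equiv.mulLeft h) _ _ fun g => ?_
  rw [act_act]; rfl

theorem rey_of_invariant (p : P) (hp : ∀ g, act ρ g p = p) :
    Rey ρ p = (Fintype.card G : ℝ) • p := by
  rw [rey_apply]
  rw [Finset.sum_congr rfl fun g _ => hp g, Finset.sum_const, Finset.card_univ,
    ← Nat.cast_smul_eq_nsmul ℝ]

theorem msum (f q : P) :
    (Finsupp.sum (AddMonoidAlgebra.coeff f) fun m c => c * coeff m q) = ∑ m ∈ f.support, coeff m f * coeff m q := MvPolynomial.sum_def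

theorem msum_subset {f : P} {s : Finset (Fin n →₀ ℕ)} (hs : f.support ⊆ s) (q : P) :
    (Finsupp.sum (AddMonoidAlgebra.coeff f) fun m c => c * coeff m q) = ∑ m ∈ s, coeff m f * coeff m q := by
  rw [msum]
  exact Finset.sum_subset hs fun m _ hm => by rw [notMem_support_iff.mp hm, zero_mul]

/-- The standard coefficientwise pairing of polynomials. -/
noncomputable def B0 : P →ₗ[ℝ] P →ₗ[ℝ] ℝ :=
  LinearMap.mk₂ ℝ (fun p q => (AddMonoidAlgebra.coeff p).sum fun m c => c * coeff m q)
    (fun p p' q => by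
      show (Finsupp.sum (AddMonoidAlgebra.coeff (p + p')) fun m c => c * coeff m q)
        = (Finsupp.sum (AddMonoidAlgebra.coeff p) fun m c => c * coeff m q) + (Finsupp.sum (AddMonoidAlgebra.coeff p') fun m c => c * coeff m q)
      rw [msum_subset (MvPolynomial.support_add) q,
        msum_subset (Finset.subset_union_left (s₂ := p'.support)) q,
        msum_subset (Finset.subset_union_right (s₁ := p.support)) q,
        ← Finset.sum_add_distrib]
      exact Finset.sum_congr rfl fun m _ => by rw [coeff_add]; ring)
    (fun r p q => by
      show (Finsupp.sum (AddMonoidAlgebra.coeff (r • p)) fun m c => c * coeff m q)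
        = r • (Finsupp.sum (AddMonoidAlgebra.coeff p) fun m c => c * coeff m q)
      rw [msum_subset (MvPolynomial.support_smul) q, msum, smul_eq_mul, Finset.mul_sum]
      exact Finset.sum_congr rfl fun m _ => by rw [coeff_smul, smul_eq_mul]; ring)
    (fun p q q' => by
      simp only [coeff_add, mul_add]
      exact Finsupp.sum_add)
    (fun r p q => by
      simp only [coeff_smul, smul_eq_mul, Finsupp.sum, Finset.mul_sum]
      exact Finset.sum_congr rfl fun m _ => by ring)

theorem B0_apply (p q : P) : B0 p q = (AddMonoidAlgebra.coeff p).sum fun m c => c * coeff m q := rfl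

theorem B0_self_nonneg (p : P) : 0 ≤ B0 p p := by
  rw [B0_apply, Finsupp.sum]
  refine Finset.sum_nonneg fun m _ => ?_
  exact mul_self_nonneg _

theorem B0_self_pos (p : P) (hp : p ≠ 0) : 0 < B0 p p := by
  rw [B0_apply, Finsupp.sum]
  have hne : p.support.Nonempty := by
    rw [Finset.nonempty_iff_ne_empty]
    exact fun h => hp (MvPolynomial.support_eq_empty.mp h)
  obtain ⟨m, hm⟩ := hne
  refine Finset.sum_pos' (fun m _ => mul_self_nonneg _) ⟨m, hm, ?_⟩
  exact mul_self_pos.mpr (mem_support_iff.mp hm)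

/-- The `G`-invariant positive definite pairing. -/
noncomputable def BB : P →ₗ[ℝ] P →ₗ[ℝ] ℝ :=
  ∑ g : G, LinearMap.compl₁₂ B0 (actL ρ g) (actL ρ g)

theorem BB_apply (p q : P) : BB ρ p q = ∑ g : G, B0 (act ρ g p) (act ρ g q) := by
  rw [BB]
  simp [LinearMap.sum_apply, LinearMap.compl₁₂_apply]

theorem BB_invariant (h : G) (p q : P) : BB ρ (act ρ h p) (act ρ h q) = BB ρ p q := by
  rw [BB_apply, BB_apply]
  refine Fintype.sum_equiv (Equiv.mulRight h) _ _ fun g => ?_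
  rw [act_act, act_act]; rfl

theorem BB_move (g : G) (p q : P) : BB ρ (act ρ g p) q = BB ρ p (act ρ g⁻¹ q) := by
  conv_rhs => rw [← BB_invariant ρ g p (act ρ g⁻¹ q)]
  rw [act_act, mul_inv_cancel, act_one]

theorem BB_self_nonneg (p : P) : 0 ≤ BB ρ p p := by
  rw [BB_apply]
  exact Finset.sum_nonneg fun g _ => B0_self_nonneg _

theorem BB_self_pos (p : P) (hp : p ≠ 0) : 0 < BB ρ p p := by
  rw [BB_apply]
  refine Finset.sum_pos' (fun g _ => B0_self_nonneg _) ⟨1, Finset.mem_univ 1, ?_⟩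
  rw [act_one]
  exact B0_self_pos p hp

theorem BB_eq_zero_iff (p : P) : BB ρ p p = 0 ↔ p = 0 := by
  constructor
  · intro h
    by_contra hp
    exact (BB_self_pos ρ p hp).ne' h
  · rintro rfl; simp


theorem B0_symm (p q : P) : B0 p q = B0 q p := by
  rw [B0_apply, B0_apply,
    msum_subset (Finset.subset_union_left (s₂ := q.support)) q,
    msum_subset (Finset.subset_union_right (s₁ := p.support)) p]
  exact Finset.sum_congr rfl fun m _ => mul_comm _ _

theorem BB_symm (p q : P) : BB ρ p q = BB ρ q p := by
  rw [BB_apply, BB_apply]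
  exact Finset.sum_congr rfl fun g _ => B0_symm _ _

section Schur

variable (U U' : Submodule ℝ (MvPolynomial (Fin n) ℝ))

/-- Restriction of the invariant pairing to a submodule. -/
noncomputable def BBr : LinearMap.BilinForm ℝ ↥U := (BB ρ).compl₁₂ U.subtype U.subtype

theorem BBr_apply (a b : ↥U) : BBr ρ U a b = BB ρ ↑a ↑b := rfl

theorem BBr_nondeg : (BBr ρ U).Nondegenerate := by
  have hL : (BBr ρ U).SeparatingLeft := by
    intro x hx
    have h0 : BB ρ ↑x ↑x = 0 := hx x
    exact Subtype.ext ((BB_eq_zero_iff ρ _).mp h0)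
  exact ⟨hL, fun x hx => hL x fun y => by
    show BB ρ ↑x ↑y = 0
    rw [BB_symm]; exact hx y⟩

theorem BB_sep {u v : ↥U} (h : ∀ b : ↥U, BB ρ ↑u ↑b = BB ρ ↑v ↑b) : u = v := by
  have h0 : BB ρ (↑u - ↑v) ((↑u : MvPolynomial (Fin n) ℝ) - ↑v) = 0 := by
    have e : BB ρ ((↑u : MvPolynomial (Fin n) ℝ) - ↑v) ((↑u : MvPolynomial (Fin n) ℝ) - ↑v)
        = (BB ρ ↑u ↑u - BB ρ ↑v ↑u) - (BB ρ ↑u ↑v - BB ρ ↑v ↑v) := by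
      simp only [map_sub, LinearMap.sub_apply]
    rw [e, h u, h v]; ring
  have := (BB_eq_zero_iff ρ _).mp h0
  exact Subtype.ext (by rwa [sub_eq_zero] at this)

variable [FiniteDimensional ℝ ↥U'] {C : MvPolynomial (Fin n) ℝ →ₗ[ℝ] MvPolynomial (Fin n) ℝ →ₗ[ℝ] ℝ}

/-- The Riesz representation of an invariant pairing, with its extension to the ambient space,
and its properties. -/
theorem riesz_equivariant
    (hUstab : ∀ (g : G), ∀ q ∈ U, act ρ g q ∈ U)
    (hU'stab : ∀ (g : G), ∀ q ∈ U', act ρ g q ∈ U')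
    (hC : ∀ (g : G), ∀ a ∈ U, ∀ b ∈ U', C (act ρ g a) (act ρ g b) = C a b) :
    ∃ φ : MvPolynomial (Fin n) ℝ →ₗ[ℝ] MvPolynomial (Fin n) ℝ,
      (∀ q ∈ U, φ q ∈ U') ∧
      (∀ g, ∀ q ∈ U, φ (act ρ g q) = act ρ g (φ q)) ∧
      (∀ a ∈ U, ∀ b ∈ U', BB ρ (φ a) b = C a b) := by
  classical
  set BU' := BBr ρ U' with hBU'def
  have hnd : (BBr ρ U').Nondegenerate := BBr_nondeg ρ U'
  let CU : ↥U →ₗ[ℝ] Module.Dual ℝ ↥U' := C.compl₁₂ U.subtype U'.subtype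
  let T : ↥U →ₗ[ℝ] ↥U' := ((BBr ρ U').toDual hnd).symm.toLinearMap ∘ₗ CU
  have hT : ∀ (a : ↥U) (b : ↥U'), BB ρ ↑(T a) ↑b = C ↑a ↑b := by
    intro a b
    have h1 := LinearMap.BilinForm.apply_toDual_symm_apply (B := BBr ρ U') (hB := hnd) (CU a) b
    exact h1
  have hTequiv : ∀ (g : G) (a : ↥U),
      T ⟨act ρ g ↑a, hUstab g ↑a a.2⟩ = ⟨act ρ g ↑(T a), hU'stab g _ (T a).2⟩ := by
    intro g a
    refine BB_sep ρ U' fun b => ?_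
    rw [hT]
    have h1 : C (act ρ g ↑a) ↑b = C ↑a (act ρ g⁻¹ ↑b) := by
      have h2 := hC g⁻¹ (act ρ g ↑a) (hUstab g ↑a a.2) ↑b b.2
      rw [act_inv_act] at h2
      exact h2.symm
    have h3 : BB ρ (act ρ g ↑(T a)) ↑b = C ↑a (act ρ g⁻¹ ↑b) := by
      rw [BB_move]
      exact hT a ⟨act ρ g⁻¹ ↑b, hU'stab g⁻¹ ↑b b.2⟩
    rw [h1, ← h3]
  obtain ⟨Ucomp, hcompl⟩ := Submodule.exists_isCompl U
  let pr : MvPolynomial (Fin n) ℝ →ₗ[ℝ] ↥U := Submodule.linearProjOfIsCompl U Ucomp hcompl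
  refine ⟨U'.subtype ∘ₗ T ∘ₗ pr, ?_, ?_, ?_⟩
  · intro q hq
    exact (T (pr q)).2
  · intro g q hq
    have hpr : ∀ (x : MvPolynomial (Fin n) ℝ) (hx : x ∈ U), pr x = ⟨x, hx⟩ := by
      intro x hx
      exact Submodule.linearProjOfIsCompl_apply_left hcompl ⟨x, hx⟩
    simp only [LinearMap.comp_apply, Submodule.subtype_apply]
    rw [hpr (act ρ g q) (hUstab g q hq), hpr q hq, hTequiv g ⟨q, hq⟩]
  · intro a ha b hb
    simp only [LinearMap.comp_apply, Submodule.subtype_apply]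
    have hpr : pr a = ⟨a, ha⟩ := Submodule.linearProjOfIsCompl_apply_left hcompl ⟨a, ha⟩
    rw [hpr]
    exact hT ⟨a, ha⟩ ⟨b, hb⟩

theorem schur_cross
    (hUstab : ∀ (g : G), ∀ q ∈ U, act ρ g q ∈ U)
    (hU'stab : ∀ (g : G), ∀ q ∈ U', act ρ g q ∈ U')
    (hC : ∀ (g : G), ∀ a ∈ U, ∀ b ∈ U', C (act ρ g a) (act ρ g b) = C a b)
    (hUirr : ∀ V : Submodule ℝ (MvPolynomial (Fin n) ℝ), V ≤ U →
      (∀ g, ∀ q ∈ V, act ρ g q ∈ V) → V = ⊥ ∨ V = U)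
    (hU'irr : ∀ V : Submodule ℝ (MvPolynomial (Fin n) ℝ), V ≤ U' →
      (∀ g, ∀ q ∈ V, act ρ g q ∈ V) → V = ⊥ ∨ V = U')
    (hniso : ¬ ∃ φ : MvPolynomial (Fin n) ℝ →ₗ[ℝ] MvPolynomial (Fin n) ℝ,
      (∀ g : G, ∀ q ∈ U, φ (act ρ g q) = act ρ g (φ q)) ∧ Set.BijOn φ U U') :
    ∀ a ∈ U, ∀ b ∈ U', C a b = 0 := by
  classical
  by_contra hcon
  push_neg at hcon
  obtain ⟨a0, ha0, b0, hb0, hC0⟩ := hcon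
  obtain ⟨φ, hφmem, hφeq, hφBB⟩ := riesz_equivariant ρ U U' hUstab hU'stab hC
  have hstabK : ∀ (g : G), ∀ q ∈ U ⊓ LinearMap.ker φ, act ρ g q ∈ U ⊓ LinearMap.ker φ := by
    rintro g q ⟨hq1, hq2⟩
    refine ⟨hUstab g q hq1, ?_⟩
    simp only [SetLike.mem_coe, LinearMap.mem_ker] at hq1 hq2 ⊢
    rw [hφeq g q hq1, hq2, map_zero]
  have hker : U ⊓ LinearMap.ker φ = ⊥ := by
    rcases hUirr _ inf_le_left hstabK with h | h
    · exact h
    · exfalso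
      have ha0' : a0 ∈ U ⊓ LinearMap.ker φ := by rw [h]; exact ha0
      have hz : φ a0 = 0 := ha0'.2
      rw [← hφBB a0 ha0 b0 hb0, hz] at hC0
      simp at hC0
  have hle2 : Submodule.map φ U ≤ U' := by
    rintro x ⟨q, hq, rfl⟩
    exact hφmem q hq
  have hstabI : ∀ (g : G), ∀ x ∈ Submodule.map φ U, act ρ g x ∈ Submodule.map φ U := by
    rintro g x ⟨q, hq, rfl⟩
    exact ⟨act ρ g q, hUstab g q hq, hφeq g q hq⟩
  have himg : Submodule.map φ U = U' := by
    rcases hU'irr _ hle2 hstabI with h | h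
    · exfalso
      have hm : φ a0 ∈ Submodule.map φ U := Submodule.mem_map_of_mem ha0
      rw [h, Submodule.mem_bot] at hm
      rw [← hφBB a0 ha0 b0 hb0, hm] at hC0
      simp at hC0
    · exact h
  refine hniso ⟨φ, hφeq, ?_, ?_, ?_⟩
  · intro q hq
    exact hφmem q hq
  · intro x hx y hy hxy
    simp only [SetLike.mem_coe] at hx hy
    have hmem : x - y ∈ U ⊓ LinearMap.ker φ := ⟨sub_mem hx hy, by
      simp only [SetLike.mem_coe, LinearMap.mem_ker, map_sub, hxy, sub_self]⟩

    rw [hker, Submodule.mem_bot, sub_eq_zero] at hmem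
    exact hmem
  · intro b hb
    rw [← himg] at hb
    obtain ⟨q, hq, rfl⟩ := hb
    exact Set.mem_image_of_mem φ hq

theorem schur_endo [FiniteDimensional ℝ ↥U]
    (hUstab : ∀ (g : G), ∀ q ∈ U, act ρ g q ∈ U)
    (habs : ∀ φ : MvPolynomial (Fin n) ℝ →ₗ[ℝ] MvPolynomial (Fin n) ℝ, (∀ q ∈ U, φ q ∈ U) →
      (∀ g : G, ∀ q ∈ U, φ (act ρ g q) = act ρ g (φ q)) → ∃ c : ℝ, ∀ q ∈ U, φ q = c • q)
    (hCU : ∀ (g : G), ∀ a ∈ U, ∀ b ∈ U, C (act ρ g a) (act ρ g b) = C a b) :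
    ∃ c : ℝ, ∀ a ∈ U, ∀ b ∈ U, C a b = c * BB ρ a b := by
  obtain ⟨φ, hφmem, hφeq, hφBB⟩ := riesz_equivariant ρ U U hUstab hUstab hCU
  obtain ⟨c, hc⟩ := habs φ hφmem hφeq
  refine ⟨c, fun a ha b hb => ?_⟩
  rw [← hφBB a ha b hb, hc a ha, map_smul, LinearMap.smul_apply, smul_eq_mul]

end Schur

end Action

end SOSAux

open SOSAux

/-- **Symmetry-adapted sum-of-squares decomposition of invariant polynomials.**
Let the finite group `G` act linearly on `ℝ^n` (via `ρ`), hence on `ℝ[X_1,…,X_n]` by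
`f^g := polyAct (ρ g⁻¹) f`.  Let `ℝ[X]_{≤d} = ⊕_{i ∈ I} ⊕_{j} W i j` be a decomposition
into irreducible `G`-submodules, the `W i j` (for fixed `i`) pairwise `G`-isomorphic
(via maps `φ i j`), absolutely irreducible (every `G`-endomorphism is scalar, i.e.
they stay irreducible over `ℂ`), and non-isomorphic for distinct `i`; let `f i 0`
cyclically generate `W i 0` and `f i j = φ i j (f i 0)`.  Then every `G`-invariant sum
of squares `p` of degree at most `2d` can be written as
`p = Σ_i Σ_j Σ_g (q i j)^g` with each `q i j` a sum of squares of elements of the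
linear span of `f i 0, …, f i (η_i - 1)`. -/
theorem invariant_sos_decomposition {n d : ℕ} {G : Type*} [Group G] [Fintype G]
    (ρ : G →* (Matrix (Fin n) (Fin n) ℝ)ˣ)
    {I : Type*} [Fintype I] (η : I → ℕ) [∀ i, NeZero (η i)]
    (W : (i : I) → Fin (η i) → Submodule ℝ (MvPolynomial (Fin n) ℝ))
    -- the `W i j` decompose the space of polynomials of degree at most `d`
    (hWle : ∀ i j, W i j ≤ restrictTotalDegree (Fin n) ℝ d)
    (hWindep : iSupIndep (fun p : Σ i : I, Fin (η i) => W p.1 p.2))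
    (hWsup : (⨆ p : Σ i : I, Fin (η i), W p.1 p.2) = restrictTotalDegree (Fin n) ℝ d)
    -- each `W i j` is a `G`-stable irreducible submodule
    (hWstab : ∀ i j (g : G), ∀ q ∈ W i j, polyAct (↑(ρ g⁻¹)) q ∈ W i j)
    (hWirr : ∀ i j, W i j ≠ ⊥ ∧ ∀ U : Submodule ℝ (MvPolynomial (Fin n) ℝ),
      U ≤ W i j → (∀ g : G, ∀ q ∈ U, polyAct (↑(ρ g⁻¹)) q ∈ U) → U = ⊥ ∨ U = W i j)
    -- each `W i j` remains irreducible over `ℂ`: `G`-endomorphisms are scalar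
    (hWabs : ∀ i j, ∀ φ : MvPolynomial (Fin n) ℝ →ₗ[ℝ] MvPolynomial (Fin n) ℝ,
      (∀ q ∈ W i j, φ q ∈ W i j) →
      (∀ g : G, ∀ q ∈ W i j, φ (polyAct (↑(ρ g⁻¹)) q) = polyAct (↑(ρ g⁻¹)) (φ q)) →
      ∃ c : ℝ, ∀ q ∈ W i j, φ q = c • q)
    -- for `i ≠ i'` the modules `W i j` and `W i' j'` are not `G`-isomorphic
    (hniso : ∀ i i', i ≠ i' → ∀ j j',
      ¬ ∃ φ : MvPolynomial (Fin n) ℝ →ₗ[ℝ] MvPolynomial (Fin n) ℝ,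
        (∀ g : G, ∀ q ∈ W i j, φ (polyAct (↑(ρ g⁻¹)) q) = polyAct (↑(ρ g⁻¹)) (φ q)) ∧
        Set.BijOn φ (W i j) (W i' j'))
    -- the polynomials `f i j`: `f i 0` cyclically generates `W i 0`, and `f i j` is its
    -- image under the `G`-isomorphism `φ i j : W i 0 → W i j`
    (f : (i : I) → Fin (η i) → MvPolynomial (Fin n) ℝ)
    (hfgen : ∀ i, Submodule.span ℝ {q | ∃ g : G, q = polyAct (↑(ρ g⁻¹)) (f i 0)} = W i 0)
    (φ : (i : I) → (j : Fin (η i)) →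
      MvPolynomial (Fin n) ℝ →ₗ[ℝ] MvPolynomial (Fin n) ℝ)
    (hφ : ∀ i j, (∀ g : G, ∀ q ∈ W i 0,
        (φ i j) (polyAct (↑(ρ g⁻¹)) q) = polyAct (↑(ρ g⁻¹)) ((φ i j) q)) ∧
      Set.BijOn (φ i j) (W i 0) (W i j) ∧ f i j = φ i j (f i 0)) :
    ∀ p : MvPolynomial (Fin n) ℝ,
      (∀ g : G, polyAct (↑(ρ g⁻¹)) p = p) →
      p.totalDegree ≤ 2 * d →
      (∃ (l : ℕ) (s : Fin l → MvPolynomial (Fin n) ℝ), p = ∑ t, (s t) ^ 2) →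
      ∃ q : (i : I) → Fin (η i) → MvPolynomial (Fin n) ℝ,
        (∀ i j, ∃ (l : ℕ) (s : Fin l → MvPolynomial (Fin n) ℝ),
          (∀ t, s t ∈ Submodule.span ℝ (Set.range (f i))) ∧
          q i j = ∑ t, (s t) ^ 2) ∧
        p = ∑ i, ∑ j, ∑ g : G, polyAct (↑(ρ g⁻¹)) (q i j) := by
  classical
  intro p hinv hdeg hsos
  obtain ⟨l, s, hp⟩ := hsos
  have hinv' : ∀ g : G, act ρ g p = p := hinv
  have hstab : ∀ i j (g : G), ∀ q ∈ W i j, act ρ g q ∈ W i j := hWstab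
  have hφeq' : ∀ i (j : Fin (η i)) (g : G), ∀ q ∈ W i 0,
      φ i j (act ρ g q) = act ρ g (φ i j q) := fun i j => (hφ i j).1
  have hf0mem : ∀ i, f i 0 ∈ W i 0 := by
    intro i
    rw [← hfgen i]
    exact Submodule.subset_span ⟨1, (act_one ρ (f i 0)).symm⟩
  have hfne : ∀ i, f i 0 ≠ 0 := by
    intro i h0
    refine (hWirr i 0).1 ?_
    rw [← hfgen i, Submodule.span_eq_bot]
    rintro x ⟨g, rfl⟩
    rw [h0, map_zero]
  have hF : ∀ i, 0 < BB ρ (f i 0) (f i 0) := fun i => BB_self_pos ρ _ (hfne i)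
  have hfd : ∀ (i : I) (j : Fin (η i)), FiniteDimensional ℝ ↥(W i j) := fun i j =>
    Submodule.finiteDimensional_of_le (hWle i j)
  have hsdeg : ∀ t, (s t).totalDegree ≤ d := by
    intro t
    refine totalDegree_le_of_sos s ?_ t
    rw [← hp]; exact hdeg
  -- decompose each `s t` into components in the `W i j`
  have hdec : ∀ t, ∃ uu : (Σ i : I, Fin (η i)) → MvPolynomial (Fin n) ℝ,
      (∀ σ, uu σ ∈ W σ.1 σ.2) ∧ s t = ∑ σ, uu σ := by
    intro t
    have hmem : s t ∈ ⨆ σ : Σ i : I, Fin (η i), W σ.1 σ.2 := by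
      rw [hWsup, mem_restrictTotalDegree]; exact hsdeg t
    rw [Submodule.mem_iSup_iff_exists_finsupp] at hmem
    obtain ⟨ff, hffmem, hffsum⟩ := hmem
    refine ⟨fun σ => ff σ, hffmem, ?_⟩
    rw [← hffsum, Finsupp.sum_fintype]
    intro σ; rfl
  choose u humem husum using hdec
  -- lift through the isomorphisms `φ`
  have hlift : ∀ (t : Fin l) (i : I) (j : Fin (η i)),
      ∃ vv, vv ∈ W i 0 ∧ φ i j vv = u t ⟨i, j⟩ := by
    intro t i j
    obtain ⟨vv, hvv, hveq⟩ := (hφ i j).2.1.2.2 (humem t ⟨i, j⟩)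
    exact ⟨vv, hvv, hveq⟩
  choose v hvmem hveq using hlift
  -- cross-isotypic vanishing
  have hcross : ∀ (i i' : I), i ≠ i' → ∀ (j : Fin (η i)) (j' : Fin (η i')),
      ∀ a ∈ W i j, ∀ b ∈ W i' j', Rey ρ (a * b) = 0 := by
    intro i i' hne j j' a ha b hb
    haveI := hfd i' j'
    apply MvPolynomial.ext
    intro m
    rw [coeff_zero]
    have hres := schur_cross ρ (W i j) (W i' j')
      (C := LinearMap.compr₂ (LinearMap.mul ℝ (MvPolynomial (Fin n) ℝ))
        ((lcoeff ℝ m) ∘ₗ Rey ρ))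
      (hstab i j) (hstab i' j')
      (by
        intro g a' ha' b' hb'
        simp only [LinearMap.compr₂_apply, LinearMap.mul_apply', LinearMap.comp_apply]
        rw [← map_mul, rey_act])
      ((hWirr i j).2) ((hWirr i' j').2) (hniso i i' hne j j') a ha b hb
    simpa only [LinearMap.compr₂_apply, LinearMap.mul_apply', LinearMap.comp_apply,
      lcoeff_apply] using hres
  -- the isotypic scalar identity
  have hiso : ∀ (i : I) (j j' : Fin (η i)), ∀ a ∈ W i 0, ∀ b ∈ W i 0,
      Rey ρ (φ i j a * φ i j' b)
        = ((BB ρ (f i 0) (f i 0))⁻¹ * BB ρ a b) • Rey ρ (f i j * f i j') := by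
    intro i j j' a ha b hb
    haveI := hfd i 0
    have key : ∀ m : Fin n →₀ ℕ, ∃ c : ℝ, ∀ x ∈ W i 0, ∀ y ∈ W i 0,
        coeff m (Rey ρ (φ i j x * φ i j' y)) = c * BB ρ x y := by
      intro m
      obtain ⟨c, hc⟩ := schur_endo ρ (W i 0)
        (C := LinearMap.compr₂
          ((LinearMap.mul ℝ (MvPolynomial (Fin n) ℝ)).compl₁₂ (φ i j) (φ i j'))
          ((lcoeff ℝ m) ∘ₗ Rey ρ))
        (hstab i 0) (hWabs i 0)
        (by
          intro g x hx y hy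
          simp only [LinearMap.compr₂_apply, LinearMap.compl₁₂_apply, LinearMap.mul_apply',
            LinearMap.comp_apply]
          rw [hφeq' i j g x hx, hφeq' i j' g y hy, ← map_mul, rey_act])
      refine ⟨c, fun x hx y hy => ?_⟩
      have := hc x hx y hy
      simpa only [LinearMap.compr₂_apply, LinearMap.compl₁₂_apply, LinearMap.mul_apply',
        LinearMap.comp_apply, lcoeff_apply] using this
    have hFne : BB ρ (f i 0) (f i 0) ≠ 0 := (hF i).ne'
    apply MvPolynomial.ext
    intro m
    obtain ⟨c, hc⟩ := key m
    rw [coeff_smul, (hφ i j).2.2, (hφ i j').2.2, hc a ha b hb,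
      hc (f i 0) (hf0mem i) (f i 0) (hf0mem i)]
    field_simp
    rw [smul_eq_mul, div_mul_eq_mul_div, eq_div_iff hFne]
    ring
  -- expansion of squares into isotypic blocks
  have hsig : ∀ (FF : (Σ i : I, Fin (η i)) → MvPolynomial (Fin n) ℝ),
      ∑ σ, FF σ = ∑ i, ∑ j, FF ⟨i, j⟩ := by
    intro FF
    rw [← Finset.univ_sigma_univ, Finset.sum_sigma]
  have hstep : ∀ t, Rey ρ ((s t) ^ 2)
      = ∑ i, ∑ j, ∑ j', Rey ρ (u t ⟨i, j⟩ * u t ⟨i, j'⟩) := by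
    intro t
    conv_lhs => rw [husum t]
    rw [sq, Finset.sum_mul_sum, map_sum]
    simp only [map_sum]
    rw [hsig]
    refine Finset.sum_congr rfl fun i _ => ?_
    refine Finset.sum_congr rfl fun j _ => ?_
    rw [hsig (fun σ' => Rey ρ (u t ⟨i, j⟩ * u t σ'))]
    rw [Finset.sum_eq_single i]
    · intro i' _ hne
      apply Finset.sum_eq_zero
      intro j' _
      exact hcross i i' (Ne.symm hne) j j' _ (humem t ⟨i, j⟩) _ (humem t ⟨i', j'⟩)
    · intro h
      exact absurd (Finset.mem_univ i) h
  set F : I → ℝ := fun i => BB ρ (f i 0) (f i 0) with hFdef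
  have hterm : ∀ t i j j', Rey ρ (u t ⟨i, j⟩ * u t ⟨i, j'⟩)
      = ((F i)⁻¹ * BB ρ (v t i j) (v t i j')) • Rey ρ (f i j * f i j') := by
    intro t i j j'
    rw [← hveq t i j, ← hveq t i j']
    exact hiso i j j' _ (hvmem t i j) _ (hvmem t i j')
  have card_pos : 0 < (Fintype.card G : ℝ) := by
    have := Fintype.card_pos (α := G)
    positivity
  have hmain : (Fintype.card G : ℝ) • p
      = ∑ i, ∑ j, ∑ j', ((F i)⁻¹ * ∑ t, BB ρ (v t i j) (v t i j'))
          • Rey ρ (f i j * f i j') := by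
    rw [← rey_of_invariant ρ p hinv', hp, map_sum,
      Finset.sum_congr rfl fun t _ => hstep t, Finset.sum_comm]
    refine Finset.sum_congr rfl fun i _ => ?_
    rw [Finset.sum_comm]
    refine Finset.sum_congr rfl fun j _ => ?_
    rw [Finset.sum_comm]
    refine Finset.sum_congr rfl fun j' _ => ?_
    rw [Finset.sum_congr rfl fun t _ => hterm t i j j', ← Finset.sum_smul]
    congr 1
    rw [Finset.mul_sum]
  -- the positive semidefinite Gram matrices
  have hM : ∀ i, Matrix.PosSemidef ((Matrix.of fun j j' : Fin (η i) =>
      ((Fintype.card G : ℝ) * F i)⁻¹ * ∑ t, BB ρ (v t i j) (v t i j'))) := by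
    intro i
    refine Matrix.PosSemidef.of_dotProduct_mulVec_nonneg ?_ ?_
    · ext j j'
      simp only [Matrix.conjTranspose_apply, Matrix.of_apply, star_trivial]
      congr 1
      exact Finset.sum_congr rfl fun t _ => BB_symm ρ _ _
    · intro x
      have hexp : ∀ t : Fin l, BB ρ (∑ j, x j • v t i j) (∑ j', x j' • v t i j')
          = ∑ j, ∑ j', x j * x j' * BB ρ (v t i j) (v t i j') := by
        intro t
        simp only [map_sum, map_smul, LinearMap.sum_apply, LinearMap.smul_apply, smul_eq_mul,
          Finset.mul_sum]
        rw [Finset.sum_comm]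
        exact Finset.sum_congr rfl fun j _ => Finset.sum_congr rfl fun j' _ => by ring
      have hnn : (0:ℝ) ≤ ∑ t, BB ρ (∑ j, x j • v t i j) (∑ j', x j' • v t i j') :=
        Finset.sum_nonneg fun t _ => BB_self_nonneg ρ _
      have hc : (0:ℝ) ≤ ((Fintype.card G : ℝ) * F i)⁻¹ := by
        have h1 := hF i
        have h2 := Fintype.card_pos (α := G)
        positivity
      have hRHS : (((Fintype.card G : ℝ) * F i)⁻¹)
            * ∑ t, BB ρ (∑ j, x j • v t i j) (∑ j', x j' • v t i j')
          = ∑ j, ∑ j', ((Fintype.card G : ℝ) * F i)⁻¹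
              * (x j * x j' * ∑ t, BB ρ (v t i j) (v t i j')) := by
        rw [Finset.sum_congr rfl fun t _ => hexp t, Finset.sum_comm, Finset.mul_sum]
        refine Finset.sum_congr rfl fun j _ => ?_
        rw [Finset.sum_comm, Finset.mul_sum]
        refine Finset.sum_congr rfl fun j' _ => ?_
        congr 1
        rw [Finset.mul_sum]
      have hLHS : star x ⬝ᵥ ((Matrix.of fun j j' : Fin (η i) =>
            ((Fintype.card G : ℝ) * F i)⁻¹ * ∑ t, BB ρ (v t i j) (v t i j')) *ᵥ x)
          = ∑ j, ∑ j', ((Fintype.card G : ℝ) * F i)⁻¹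
              * (x j * x j' * ∑ t, BB ρ (v t i j) (v t i j')) := by
        simp only [dotProduct, Matrix.mulVec, Matrix.of_apply, star_trivial,
          Pi.star_apply, Finset.mul_sum]
        refine Finset.sum_congr rfl fun j _ => Finset.sum_congr rfl fun j' _ => ?_
        rw [Finset.sum_mul, Finset.mul_sum]
        exact Finset.sum_congr rfl fun t _ => by ring
      rw [hLHS, ← hRHS]
      exact mul_nonneg hc hnn
  have hfac : ∀ i, ∃ L : Matrix (Fin (η i)) (Fin (η i)) ℝ,
      (Matrix.of fun j j' : Fin (η i) =>
        ((Fintype.card G : ℝ) * F i)⁻¹ * ∑ t, BB ρ (v t i j) (v t i j')) = Lᴴ * L :=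
    fun i => by
      have key : ∀ {k : ℕ} (M : Matrix (Fin k) (Fin k) ℝ), M.PosSemidef →
          ∃ L : Matrix (Fin k) (Fin k) ℝ, M = Lᴴ * L := by
        intro k M hM
        open scoped MatrixOrder in
        exact ⟨CFC.sqrt M, by
          have h : (CFC.sqrt M)ᴴ = CFC.sqrt M := (CFC.sqrt_nonneg M).isSelfAdjoint.star_eq
          rw [h, CFC.sqrt_mul_sqrt_self M (Matrix.nonneg_iff_posSemidef.mpr hM)]⟩
      exact key _ (hM i)
  choose L hL using hfac
  have hLentry : ∀ i (j j' : Fin (η i)),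
      ((Fintype.card G : ℝ) * F i)⁻¹ * ∑ t, BB ρ (v t i j) (v t i j')
      = ∑ k, L i k j * L i k j' := by
    intro i j j'
    have h1 : (Matrix.of fun j j' : Fin (η i) =>
        ((Fintype.card G : ℝ) * F i)⁻¹ * ∑ t, BB ρ (v t i j) (v t i j')) j j'
        = ((L i)ᴴ * (L i)) j j' := by rw [hL i]
    simpa only [Matrix.mul_apply, Matrix.conjTranspose_apply, star_trivial,
      Matrix.of_apply] using h1
  -- final witness
  refine ⟨fun i k => (∑ j, L i k j • f i j) ^ 2, ?_, ?_⟩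
  · intro i k
    refine ⟨1, fun _ => ∑ j, L i k j • f i j, fun _ => ?_, ?_⟩
    · exact Submodule.sum_mem _ fun j _ =>
        Submodule.smul_mem _ _ (Submodule.subset_span ⟨j, rfl⟩)
    · show (∑ j, L i k j • f i j) ^ 2 = ∑ t : Fin 1, (∑ j, L i k j • f i j) ^ 2
      exact (Fin.sum_univ_one fun _ => (∑ j : Fin (η i), L i k j • f i j) ^ 2).symm
  · have hqrey : ∀ i (k : Fin (η i)), Rey ρ ((∑ j, L i k j • f i j) ^ 2)
        = ∑ j, ∑ j', (L i k j * L i k j') • Rey ρ (f i j * f i j') := by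
      intro i k
      rw [sq, Finset.sum_mul_sum, map_sum]
      simp only [map_sum]
      refine Finset.sum_congr rfl fun j _ => Finset.sum_congr rfl fun j' _ => ?_
      rw [smul_mul_smul_comm, map_smul]
    have hblock : ∀ i, ∑ k, Rey ρ ((∑ j, L i k j • f i j) ^ 2)
        = ∑ j, ∑ j', (((Fintype.card G : ℝ) * F i)⁻¹ * ∑ t, BB ρ (v t i j) (v t i j'))
            • Rey ρ (f i j * f i j') := by
      intro i
      rw [Finset.sum_congr rfl fun k _ => hqrey i k, Finset.sum_comm]
      refine Finset.sum_congr rfl fun j _ => ?_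
      rw [Finset.sum_comm]
      refine Finset.sum_congr rfl fun j' _ => ?_
      rw [hLentry i j j', ← Finset.sum_smul]
    have hps : p = ∑ i, ∑ k, Rey ρ ((∑ j, L i k j • f i j) ^ 2) := by
      have h2 : p = (Fintype.card G : ℝ)⁻¹ • ((Fintype.card G : ℝ) • p) := by
        rw [smul_smul, inv_mul_cancel₀ card_pos.ne', one_smul]
      rw [Finset.sum_congr rfl fun i _ => hblock i, h2, hmain, Finset.smul_sum]
      refine Finset.sum_congr rfl fun i _ => ?_
      rw [Finset.smul_sum]
      refine Finset.sum_congr rfl fun j _ => ?_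
      rw [Finset.smul_sum]
      refine Finset.sum_congr rfl fun j' _ => ?_
      rw [smul_smul]
      congr 1
      rw [mul_inv]
      ring
    rw [hps]
    refine Finset.sum_congr rfl fun i _ => Finset.sum_congr rfl fun k _ => ?_
    rw [rey_apply]
    rfl
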